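/- For every prime p and every integer k with 1 ≤ k ≤ p-1, we have (p-1)! ≡ -k^(p-1) mod p; in particular summing over k: (p-1)! ≡ -1 + p·∑_{k=1}^{p-1} δ₀(k) mod p², where δ₀(k) is defined by k^(p-1) ≡ 1 + p·δ₀(k) mod p². -/

import Mathlib

private lemma aux_pow (p a : ℤ) : ∀ n : ℕ, (1 + p*a)^n ≡ 1 + (n:ℤ)*(p*a) [ZMOD p^2]
  | 0 => by simp
  | (n+1) => by
    have ih := aux_pow p a n
    have h2 : (1 + (n:ℤ)*(p*a)) * (1 + p*a) ≡ 1 + ((n:ℤ)+1)*(p*a) [ZMOD p^2] := by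
      have h : (1 + ((n:ℤ)+1)*(p*a)) - (1 + (n:ℤ)*(p*a)) * (1 + p*a) = p^2 * (-(n*a^2)) := by ring
      exact Int.modEq_iff_dvd.mpr ⟨_, h⟩
    have : (1 + p*a)^(n+1) ≡ 1 + ((n:ℤ)+1)*(p*a) [ZMOD p^2] := by
      rw [pow_succ (1 + p*a)]
      exact (ih.mul_right _).trans h2
    simpa [Nat.cast_succ] using this

private lemma aux_prod (p : ℤ) (f : ℕ → ℤ) (s : Finset ℕ) :
    ∏ k ∈ s, (1 + p * f k) ≡ 1 + p * ∑ k ∈ s, f k [ZMOD p^2] := by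
  classical
  induction s using Finset.induction_on with
  | empty => simp
  | insert _ _ hns ih =>
    rename_i a s
    rw [Finset.prod_insert hns, Finset.sum_insert hns]
    have h2 : (1 + p * f a) * (1 + p * ∑ k ∈ s, f k) ≡ 1 + p * (f a + ∑ k ∈ s, f k) [ZMOD p^2] := by
      have h : (1 + p * (f a + ∑ k ∈ s, f k)) - (1 + p * f a) * (1 + p * ∑ k ∈ s, f k)
          = p^2 * (-(f a * ∑ k ∈ s, f k)) := by ring
      exact Int.modEq_iff_dvd.mpr ⟨_, h⟩
    exact ((ih.mul_left _).trans h2)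

private lemma aux_prod_congr (n : ℤ) (f g : ℕ → ℤ) (s : Finset ℕ)
    (h : ∀ k ∈ s, f k ≡ g k [ZMOD n]) :
    ∏ k ∈ s, f k ≡ ∏ k ∈ s, g k [ZMOD n] := by
  classical
  induction s using Finset.induction_on with
  | empty => simp
  | insert _ _ hns ih =>
    rename_i a s
    rw [Finset.prod_insert hns, Finset.prod_insert hns]
    exact (h a (Finset.mem_insert_self a s)).mul
      (ih fun k hk => h k (Finset.mem_insert_of_mem hk))

theorem stmt_1 (p : ℕ) (hp : p.Prime) (hodd : Odd p)
    (δ₀ : ℕ → ℤ)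
    (hδ : ∀ k ∈ Finset.Icc 1 (p - 1),
      (k : ℤ) ^ (p - 1) ≡ 1 + (p : ℤ) * δ₀ k [ZMOD ((p : ℤ) ^ 2)]) :
    (∀ k ∈ Finset.Icc 1 (p - 1),
      ((p - 1).factorial : ℤ) ≡ -(k : ℤ) ^ (p - 1) [ZMOD (p : ℤ)]) ∧
    ((p - 1).factorial : ℤ) ≡
      -1 + (p : ℤ) * ∑ k ∈ Finset.Icc 1 (p - 1), δ₀ k [ZMOD ((p : ℤ) ^ 2)] := by
  haveI : Fact p.Prime := ⟨hp⟩
  -- Wilson's theorem over ℤ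
  have hwil : ((p - 1).factorial : ℤ) ≡ -1 [ZMOD (p : ℤ)] := by
    have := ZMod.wilsons_lemma p
    have h2 : (((p - 1).factorial : ℤ) : ZMod p) = ((-1 : ℤ) : ZMod p) := by
      push_cast
      exact this
    exact (ZMod.intCast_eq_intCast_iff _ _ _).mp h2
  have hpdvd : (p : ℤ) ∣ (p : ℤ)^2 := ⟨p, by ring⟩
  -- first part
  have part1 : ∀ k ∈ Finset.Icc 1 (p - 1),
      ((p - 1).factorial : ℤ) ≡ -(k : ℤ) ^ (p - 1) [ZMOD (p : ℤ)] := by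
    intro k hk
    have h1 : (k : ℤ) ^ (p - 1) ≡ 1 + (p : ℤ) * δ₀ k [ZMOD (p : ℤ)] :=
      (hδ k hk).of_dvd hpdvd
    have h2 : (1 : ℤ) + (p : ℤ) * δ₀ k ≡ 1 [ZMOD (p : ℤ)] := by
      exact Int.modEq_iff_dvd.mpr ⟨-δ₀ k, by ring⟩
    have h3 : (k : ℤ) ^ (p - 1) ≡ 1 [ZMOD (p : ℤ)] := h1.trans h2
    calc ((p - 1).factorial : ℤ) ≡ -1 [ZMOD (p:ℤ)] := hwil
      _ ≡ -(k : ℤ) ^ (p - 1) [ZMOD (p:ℤ)] := h3.symm.neg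
  refine ⟨part1, ?_⟩
  -- Wilson quotient
  obtain ⟨W, hW⟩ : ∃ W : ℤ, ((p - 1).factorial : ℤ) = -1 + (p:ℤ) * W := by
    obtain ⟨c, hc⟩ := Int.modEq_iff_dvd.mp hwil
    exact ⟨-c, by linarith⟩
  -- product of hδ
  have hfac : ∏ k ∈ Finset.Icc 1 (p-1), (k:ℤ) = ((p - 1).factorial : ℤ) := by
    rw [← Nat.cast_prod]
    norm_cast
    rw [← Finset.Ico_add_one_right_eq_Icc]
    exact Finset.prod_Ico_id_eq_factorial (p-1)
  have hprod : ((p - 1).factorial : ℤ) ^ (p - 1) ≡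
      1 + (p:ℤ) * ∑ k ∈ Finset.Icc 1 (p - 1), δ₀ k [ZMOD ((p:ℤ)^2)] := by
    have e1 : ((p - 1).factorial : ℤ) ^ (p - 1) = ∏ k ∈ Finset.Icc 1 (p-1), (k:ℤ)^(p-1) := by
      rw [← hfac, Finset.prod_pow]
    rw [e1]
    exact (aux_prod_congr _ _ _ _ hδ).trans (aux_prod (p:ℤ) δ₀ _)
  -- compute factorial^(p-1) via W
  have heven : Even (p - 1) := Nat.Odd.sub_odd hodd odd_one
  have e2 : ((p - 1).factorial : ℤ) ^ (p - 1) = (1 + (p:ℤ) * (-W)) ^ (p - 1) := by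
    rw [hW]
    rw [show (-1 + (p:ℤ)*W) = -(1 + (p:ℤ)*(-W)) by ring]
    exact (heven.neg_pow _)
  have h4 : ((p - 1).factorial : ℤ) ^ (p - 1) ≡ 1 + ((p-1:ℕ):ℤ) * ((p:ℤ) * (-W)) [ZMOD ((p:ℤ)^2)] := by
    rw [e2]; exact aux_pow (p:ℤ) (-W) (p-1)
  have hp1 : ((p-1:ℕ):ℤ) = (p:ℤ) - 1 := by
    have : 1 ≤ p := hp.one_lt.le
    push_cast [this]
    ring
  have h5 : (1 : ℤ) + ((p-1:ℕ):ℤ) * ((p:ℤ) * (-W)) ≡ 1 + (p:ℤ) * W [ZMOD ((p:ℤ)^2)] := by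
    rw [hp1]
    exact Int.modEq_iff_dvd.mpr ⟨W, by ring⟩
  have h6 : (1 : ℤ) + (p:ℤ) * W ≡ 1 + (p:ℤ) * ∑ k ∈ Finset.Icc 1 (p - 1), δ₀ k [ZMOD ((p:ℤ)^2)] :=
    (h5.symm.trans h4.symm).trans hprod
  -- deduce p ∣ W - ∑
  obtain ⟨c, hc⟩ := Int.modEq_iff_dvd.mp h6
  have hpne : (p:ℤ) ≠ 0 := by exact_mod_cast hp.ne_zero
  have hdvd : (p:ℤ) ∣ (∑ k ∈ Finset.Icc 1 (p - 1), δ₀ k) - W := by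
    have h7 : (p:ℤ) * ((∑ k ∈ Finset.Icc 1 (p - 1), δ₀ k) - W) = (p:ℤ) * ((p:ℤ) * c) := by
      ring_nf
      ring_nf at hc
      linarith
    exact ⟨c, mul_left_cancel₀ hpne h7⟩
  obtain ⟨d, hd⟩ := hdvd
  rw [hW]
  exact Int.modEq_iff_dvd.mpr ⟨d, by linear_combination (p:ℤ) * hd⟩
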